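/- Let Θ ⊆ ℝ^d be convex and compact, and let f : Θ × Θ → ℝ be a bifunction where f_{θ'}(θ) denotes the loss with distribution-generating parameter θ' and evaluation parameter θ. Suppose each f_{θ'}(·) is differentiable and α-strongly convex in the evaluation parameter, and ∇f_{·}(θ) is β-Lipschitz in the distribution-generating parameter, i.e., ‖∇f_{θ₁}(θ) - ∇f_{θ₂}(θ)‖ ≤ β‖θ₁ - θ₂‖ for all θ. Let θ* = argmin_{θ∈Θ} f_{θ₁}(θ) and θ̂* = argmin_{θ∈Θ} f_{θ₂}(θ). Then ‖θ* - θ̂*‖ ≤ (β/α)‖θ₁ - θ₂‖. -/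

import Mathlib

open Finset

/-- Proposition 1 (contraction of minimizers): under α-strong convexity in the
evaluation parameter and β-Lipschitz continuity of the gradient in the
distribution-generating parameter, the minimizers satisfy
‖θ* - θ̂*‖ ≤ (β/α)‖θ₁ - θ₂‖. -/
theorem minimizer_contraction {d : ℕ}
    (Θ : Set (EuclideanSpace ℝ (Fin d)))
    (hconv : Convex ℝ Θ) (hcomp : IsCompact Θ)
    (f : EuclideanSpace ℝ (Fin d) → EuclideanSpace ℝ (Fin d) → ℝ)
    (g : EuclideanSpace ℝ (Fin d) → EuclideanSpace ℝ (Fin d) → EuclideanSpace ℝ (Fin d))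
    (α β : ℝ) (hα : 0 < α) (hβ : 0 ≤ β)
    (hsc : ∀ p ∈ Θ, ∀ x ∈ Θ, ∀ y ∈ Θ,
      f p y ≥ f p x + (inner ℝ (g p x) (y - x) : ℝ) + (α / 2) * ‖x - y‖ ^ 2)
    (hlip : ∀ p₁ ∈ Θ, ∀ p₂ ∈ Θ, ∀ x ∈ Θ, ‖g p₁ x - g p₂ x‖ ≤ β * ‖p₁ - p₂‖)
    (θ₁ θ₂ θs θhs : EuclideanSpace ℝ (Fin d))
    (hθ₁ : θ₁ ∈ Θ) (hθ₂ : θ₂ ∈ Θ) (hθs : θs ∈ Θ) (hθhs : θhs ∈ Θ)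
    (hmin₁ : IsMinOn (f θ₁) Θ θs) (hmin₂ : IsMinOn (f θ₂) Θ θhs)
    (hfoc₁ : ∀ θ ∈ Θ, (inner ℝ (g θ₁ θs) (θ - θs) : ℝ) ≥ 0)
    (hfoc₂ : ∀ θ ∈ Θ, (inner ℝ (g θ₂ θhs) (θ - θhs) : ℝ) ≥ 0) :
    ‖θs - θhs‖ ≤ (β / α) * ‖θ₁ - θ₂‖ := by
  have h1 := hsc θ₂ hθ₂ θs hθs θhs hθhs
  have h2 := hsc θ₂ hθ₂ θhs hθhs θs hθs
  have e1 : (inner ℝ (g θ₂ θs) (θhs - θs) : ℝ) = -(inner ℝ (g θ₂ θs) (θs - θhs) : ℝ) := by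
    rw [← inner_neg_right]; congr 1; abel
  have e2 : ‖θhs - θs‖ = ‖θs - θhs‖ := by rw [← norm_neg]; congr 1; abel
  have hmono : α * ‖θs - θhs‖ ^ 2 ≤
      (inner ℝ (g θ₂ θs) (θs - θhs) : ℝ) - (inner ℝ (g θ₂ θhs) (θs - θhs) : ℝ) := by
    rw [e1] at h1; rw [e2] at h2; linarith
  have hfoc₂' := hfoc₂ θs hθs
  have hfoc₁' := hfoc₁ θhs hθhs
  have e3 : (inner ℝ (g θ₁ θs) (θhs - θs) : ℝ) = -(inner ℝ (g θ₁ θs) (θs - θhs) : ℝ) := by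
    rw [← inner_neg_right]; congr 1; abel
  have hcs : (inner ℝ (g θ₂ θs - g θ₁ θs) (θs - θhs) : ℝ) ≤ ‖g θ₂ θs - g θ₁ θs‖ * ‖θs - θhs‖ :=
    real_inner_le_norm _ _
  have hlip' : ‖g θ₂ θs - g θ₁ θs‖ ≤ β * ‖θ₁ - θ₂‖ := by
    have := hlip θ₂ hθ₂ θ₁ hθ₁ θs hθs
    rwa [show ‖θ₂ - θ₁‖ = ‖θ₁ - θ₂‖ by rw [← norm_neg]; congr 1; abel] at this
  have hsplit : (inner ℝ (g θ₂ θs) (θs - θhs) : ℝ) =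
      (inner ℝ (g θ₂ θs - g θ₁ θs) (θs - θhs) : ℝ) + (inner ℝ (g θ₁ θs) (θs - θhs) : ℝ) := by
    rw [inner_sub_left]; ring
  have key : α * ‖θs - θhs‖ ^ 2 ≤ β * ‖θ₁ - θ₂‖ * ‖θs - θhs‖ := by
    nlinarith [hmono, hfoc₂', hfoc₁', e3, hcs, hlip', hsplit, norm_nonneg (θs - θhs)]
  rcases eq_or_lt_of_le (norm_nonneg (θs - θhs)) with h0 | h0
  · rw [← h0]; positivity
  · rw [div_mul_eq_mul_div, le_div_iff₀ hα]
    nlinarith [key]
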